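/- Let n, m ≥ 1 and let y_1, ..., y_m be positive real numbers. Over all n×m matrices A in which each row is a permutation of (y_1, ..., y_m), the maximum of Σ_{j=1}^m Π_{i=1}^n A_{ij} equals Σ_{j=1}^m y_j^n. -/
import Mathlib

open Finset

theorem stmt4 (n m : ℕ) (hn : 1 ≤ n) (hm : 1 ≤ m) (y : Fin m → ℝ) (hy : ∀ j, 0 < y j) :
    IsGreatest
      {S : ℝ | ∃ A : Fin n → Fin m → ℝ,
        (∀ i, ∃ σ : Equiv.Perm (Fin m), ∀ j, A i j = y (σ j)) ∧
        S = ∑ j, ∏ i, A i j}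
      (∑ j, (y j) ^ n) := by
  have hn0 : (0:ℝ) < n := by exact_mod_cast hn
  constructor
  · exact ⟨fun _ j => y j, fun i => ⟨Equiv.refl _, fun j => rfl⟩, by
      simp [Finset.prod_const]⟩
  · rintro S ⟨A, hA, rfl⟩
    have hApos : ∀ i j, 0 < A i j := by
      intro i j; obtain ⟨σ, hσ⟩ := hA i; rw [hσ]; exact hy _
    have key : ∀ j, ∏ i, A i j ≤ (∑ i, (A i j)^n) / n := by
      intro j
      have h := Real.geom_mean_le_arith_mean_weighted Finset.univ
        (fun _ => (n:ℝ)⁻¹) (fun i => (A i j)^n)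
        (fun _ _ => by positivity)
        (by simp; field_simp)
        (fun i _ => (pow_pos (hApos i j) n).le)
      calc ∏ i, A i j = ∏ i, ((A i j)^n) ^ ((n:ℝ)⁻¹) := by
            apply Finset.prod_congr rfl; intro i _
            rw [Real.pow_rpow_inv_natCast (hApos i j).le (by omega)]
        _ ≤ ∑ i, (n:ℝ)⁻¹ * (A i j)^n := h
        _ = (∑ i, (A i j)^n) / n := by rw [← Finset.mul_sum]; ring
    calc ∑ j, ∏ i, A i j ≤ ∑ j, (∑ i, (A i j)^n)/n :=
          Finset.sum_le_sum fun j _ => key j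
      _ = (∑ i, ∑ j, (A i j)^n)/n := by rw [← Finset.sum_div, Finset.sum_comm]
      _ = (∑ _i : Fin n, ∑ j, (y j)^n)/n := by
            congr 1; apply Finset.sum_congr rfl; intro i _
            obtain ⟨σ, hσ⟩ := hA i
            simp only [hσ]
            exact Fintype.sum_equiv σ _ _ (fun j => rfl)
      _ = ∑ j, (y j)^n := by
            rw [Finset.sum_const, Finset.card_fin, nsmul_eq_mul]
            field_simp
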